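/- Let L be a symmetric positive semidefinite d×d real matrix, and let u, v ∈ ℝ^d be vectors such that u is orthogonal to the nullspace of L or v is orthogonal to the nullspace of L. Then |⟨u, v⟩| ≤ √(uᵀ L† u) · √(vᵀ L v), where L† is the Moore–Penrose pseudo-inverse of L. -/

import Mathlib

open Matrix

private lemma mv_dp {d : ℕ} (M : Matrix (Fin d) (Fin d) ℝ) (a b : Fin d → ℝ) :
    (M *ᵥ a) ⬝ᵥ b = a ⬝ᵥ (Mᵀ *ᵥ b) := by
  rw [dotProduct_comm, Matrix.dotProduct_mulVec, ← Matrix.mulVec_transpose,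
    dotProduct_comm]

/-- Cauchy–Schwarz for the semi-inner-product of a PSD matrix. -/
private lemma psd_cs {d : ℕ} {L : Matrix (Fin d) (Fin d) ℝ} (h : L.PosSemidef)
    (x y : Fin d → ℝ) :
    |x ⬝ᵥ L.mulVec y| ≤ Real.sqrt (x ⬝ᵥ L.mulVec x) * Real.sqrt (y ⬝ᵥ L.mulVec y) := by
  obtain ⟨B, hB⟩ : ∃ B : Matrix (Fin d) (Fin d) ℝ, L = Bᴴ * B := by
    classical
    open scoped MatrixOrder in
    obtain ⟨B, hB⟩ := CStarAlgebra.nonneg_iff_eq_star_mul_self.mp h.nonneg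
    exact ⟨B, hB⟩
  have key : ∀ a b : Fin d → ℝ, a ⬝ᵥ L.mulVec b = (B.mulVec a) ⬝ᵥ (B.mulVec b) := by
    intro a b
    rw [hB, Matrix.conjTranspose_eq_transpose_of_trivial, ← Matrix.mulVec_mulVec,
      Matrix.dotProduct_mulVec, Matrix.vecMul_transpose]
  rw [key, key, key]
  set a := B.mulVec x
  set b := B.mulVec y
  have h1 : (a ⬝ᵥ b) ^ 2 ≤ (a ⬝ᵥ a) * (b ⬝ᵥ b) := by
    simpa [dotProduct, sq] using
      Finset.sum_mul_sq_le_sq_mul_sq Finset.univ a b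
  calc |a ⬝ᵥ b| = Real.sqrt ((a ⬝ᵥ b) ^ 2) := (Real.sqrt_sq_eq_abs _).symm
    _ ≤ Real.sqrt ((a ⬝ᵥ a) * (b ⬝ᵥ b)) := Real.sqrt_le_sqrt h1
    _ = Real.sqrt (a ⬝ᵥ a) * Real.sqrt (b ⬝ᵥ b) :=
      Real.sqrt_mul (by simpa [dotProduct, sq] using
        Finset.sum_nonneg (fun i _ => mul_self_nonneg (a i))) _

/-- Restricted Cauchy–Schwarz inequality for the semi-norms induced by a
symmetric PSD matrix `L` and its Moore–Penrose pseudo-inverse `L†`: if `u` or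
`v` is orthogonal to the nullspace of `L`, then
`|⟨u, v⟩| ≤ √(uᵀ L† u) · √(vᵀ L v)`. -/
theorem restricted_cauchy_schwarz (d : ℕ)
    (L Ldag : Matrix (Fin d) (Fin d) ℝ)
    (hPSD : L.PosSemidef)
    (hMP1 : L * Ldag * L = L)
    (hMP2 : Ldag * L * Ldag = Ldag)
    (hMP3 : (L * Ldag)ᵀ = L * Ldag)
    (hMP4 : (Ldag * L)ᵀ = Ldag * L)
    (u v : Fin d → ℝ)
    (horth : (∀ w : Fin d → ℝ, L.mulVec w = 0 → u ⬝ᵥ w = 0) ∨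
             (∀ w : Fin d → ℝ, L.mulVec w = 0 → v ⬝ᵥ w = 0)) :
    |u ⬝ᵥ v| ≤ Real.sqrt (u ⬝ᵥ Ldag.mulVec u) * Real.sqrt (v ⬝ᵥ L.mulVec v) := by
  have hL : Lᵀ = L := by
    have := hPSD.isHermitian.eq
    rwa [Matrix.conjTranspose_eq_transpose_of_trivial] at this
  -- `L * Ldagᵀ = Ldag * L` and `Ldagᵀ * L = L * Ldag`
  have hLY_eq : L * Ldagᵀ = Ldag * L := by
    calc L * Ldagᵀ = (Ldag * Lᵀ)ᵀ := by
          rw [Matrix.transpose_mul, Matrix.transpose_transpose]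
      _ = (Ldag * L)ᵀ := by rw [hL]
      _ = Ldag * L := hMP4
  have hYL_eq : Ldagᵀ * L = L * Ldag := by
    calc Ldagᵀ * L = (Lᵀ * Ldag)ᵀ := by
          rw [Matrix.transpose_mul, Matrix.transpose_transpose]
      _ = (L * Ldag)ᵀ := by rw [hL]
      _ = L * Ldag := hMP3
  -- transposed Moore–Penrose identities
  have hY1 : L * Ldagᵀ * L = L := by
    have t := congrArg Matrix.transpose hMP1
    rw [Matrix.transpose_mul, Matrix.transpose_mul, hL] at t
    rw [Matrix.mul_assoc]
    exact t
  have hY2 : Ldagᵀ * L * Ldagᵀ = Ldagᵀ := by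
    have t := congrArg Matrix.transpose hMP2
    calc Ldagᵀ * L * Ldagᵀ = Ldagᵀ * Lᵀ * Ldagᵀ := by rw [hL]
      _ = (Ldag * L * Ldag)ᵀ := by
          rw [Matrix.transpose_mul, Matrix.transpose_mul, Matrix.mul_assoc]
      _ = Ldagᵀ := t
  -- `L * Ldag = L * Ldagᵀ`
  have key1 : (L * Ldag) * (L * Ldagᵀ) = L * Ldagᵀ := by
    rw [← Matrix.mul_assoc, hMP1]
  have key2 : (L * Ldagᵀ) * (L * Ldag) = L * Ldag := by
    rw [← Matrix.mul_assoc, hY1]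
  have hsymY : (L * Ldagᵀ)ᵀ = L * Ldagᵀ := by
    rw [Matrix.transpose_mul, Matrix.transpose_transpose, hL, hLY_eq]
  have hA : L * Ldag = L * Ldagᵀ := by
    have t := congrArg Matrix.transpose key2
    rw [Matrix.transpose_mul, hMP3, hsymY, key1] at t
    exact t.symm
  have hcomm : L * Ldag = Ldag * L := hA.trans hLY_eq
  have hXL_YL : Ldag * L = Ldagᵀ * L := by rw [hYL_eq, hA, hLY_eq]
  -- symmetry of the pseudoinverse
  have hsym : Ldagᵀ = Ldag := by
    calc Ldagᵀ = Ldagᵀ * L * Ldagᵀ := hY2.symm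
      _ = (Ldag * L) * Ldagᵀ := by rw [← hXL_YL]
      _ = Ldag * (L * Ldagᵀ) := Matrix.mul_assoc _ _ _
      _ = Ldag * (L * Ldag) := by rw [← hA]
      _ = Ldag * L * Ldag := (Matrix.mul_assoc _ _ _).symm
      _ = Ldag := hMP2
  -- projection: a vector orthogonal to the nullspace is fixed by `L * Ldag`
  have hLP : L * (L * Ldag) = L := by rw [hcomm, ← Matrix.mul_assoc, hMP1]
  have fix : ∀ x : Fin d → ℝ, (∀ w : Fin d → ℝ, L.mulVec w = 0 → x ⬝ᵥ w = 0) →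
      x = (L * Ldag) *ᵥ x := by
    intro x hx
    set n : Fin d → ℝ := x - (L * Ldag) *ᵥ x with hn
    have hLn : L *ᵥ n = 0 := by
      rw [hn, Matrix.mulVec_sub, Matrix.mulVec_mulVec, hLP, sub_self]
    have h1 : x ⬝ᵥ n = 0 := hx n hLn
    have h2 : ((L * Ldag) *ᵥ x) ⬝ᵥ n = 0 := by
      rw [mv_dp, hMP3, hcomm, ← Matrix.mulVec_mulVec, hLn, Matrix.mulVec_zero,
        dotProduct_zero]
    have hnn : n ⬝ᵥ n = 0 := by
      have : n ⬝ᵥ n = x ⬝ᵥ n - ((L * Ldag) *ᵥ x) ⬝ᵥ n := by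
        rw [hn, sub_dotProduct]
      rw [this, h1, h2, sub_zero]
    have hn0 : n = 0 := dotProduct_self_eq_zero.mp hnn
    rw [hn] at hn0
    exact sub_eq_zero.mp hn0
  have hproj : u ⬝ᵥ v = u ⬝ᵥ ((L * Ldag) *ᵥ v) := by
    rcases horth with hu | hv
    · conv_lhs => rw [fix u hu]
      rw [mv_dp, hMP3]
    · conv_lhs => rw [fix v hv]
  have hw1 : u ⬝ᵥ v = (Ldag *ᵥ u) ⬝ᵥ (L *ᵥ v) := by
    rw [hproj, mv_dp, hsym, Matrix.mulVec_mulVec, ← hcomm]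
  have hw2 : u ⬝ᵥ (Ldag *ᵥ u) = (Ldag *ᵥ u) ⬝ᵥ (L *ᵥ (Ldag *ᵥ u)) := by
    rw [mv_dp, hsym, Matrix.mulVec_mulVec, Matrix.mulVec_mulVec, hMP2]
  calc |u ⬝ᵥ v| = |(Ldag *ᵥ u) ⬝ᵥ L.mulVec v| := by rw [hw1]
    _ ≤ Real.sqrt ((Ldag *ᵥ u) ⬝ᵥ L.mulVec (Ldag *ᵥ u)) * Real.sqrt (v ⬝ᵥ L.mulVec v) :=
        psd_cs hPSD _ _
    _ = Real.sqrt (u ⬝ᵥ Ldag.mulVec u) * Real.sqrt (v ⬝ᵥ L.mulVec v) := by rw [hw2]
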